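/- Let L > 0, N ≥ 1, h_i ∈ (0, 3/2], set U = √(L·Δ / ∑_{i=0}^{N-1} h_i) with Δ > 0, x_i = (U/L)∑_{j=i}^{N-1} h_j, f_i = Δ - (U²/(2L))∑_{j=0}^{i-1} h_j·2 (i.e., linear decrements). Define f : ℝ → ℝ by f(x) = (L/2)(x+U/L)² - U²/(2L) for x ≤ x_N, f(x) = U(x - x_{i+1}) + f_{i+1} for x ∈ [x_{i+1}, x_i], and f(x) = (L/2)(x-x₀)² + U(x - x₀) + f₀ for x ≥ x₀. Then f is convex with L-Lipschitz derivative, satisfies the gradient iteration with the given steps, and achieves ‖f'(x_N)‖² = L(f(x₀)-f(x_N))/∑ h_i, proving tightness of the convex rate. -/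

import Mathlib

lemma q_sq (s : ℝ) : (max s 0)^2 = s * max s 0 := by
  rcases le_total s 0 with hs|hs
  · simp [max_eq_right hs]
  · simp [max_eq_left hs, pow_two]

lemma q_hasDerivAt (t : ℝ) : HasDerivAt (fun s : ℝ => (max s 0)^2) (2 * max t 0) t := by
  rcases lt_trichotomy t 0 with ht|ht|ht
  · have hev : (fun s : ℝ => (max s 0)^2) =ᶠ[nhds t] (fun _ => (0:ℝ)) := by
      filter_upwards [Iio_mem_nhds ht] with s hs
      simp [max_eq_right (le_of_lt (Set.mem_Iio.mp hs))]
    rw [max_eq_right ht.le, mul_zero]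
    exact (hasDerivAt_const t 0).congr_of_eventuallyEq hev
  · subst ht
    rw [hasDerivAt_iff_isLittleO]
    have h1 : Filter.Tendsto (fun s : ℝ => max s 0) (nhds 0) (nhds 0) := by
      have hc : Continuous fun s : ℝ => max s 0 := continuous_id.max continuous_const
      simpa using hc.tendsto 0
    have h2 : (fun s : ℝ => max s 0) =o[nhds (0:ℝ)] (fun _ => (1:ℝ)) :=
      Asymptotics.isLittleO_one_iff ℝ |>.mpr h1
    have h3 : (fun s : ℝ => s * max s 0) =o[nhds (0:ℝ)] (fun s => s * 1) :=
      (Asymptotics.isBigO_refl _ _).mul_isLittleO h2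
    simpa [q_sq] using h3
  · have hev : (fun s : ℝ => (max s 0)^2) =ᶠ[nhds t] (fun s => s^2) := by
      filter_upwards [Ioi_mem_nhds ht] with s hs
      simp [max_eq_left (le_of_lt (Set.mem_Ioi.mp hs))]
    rw [max_eq_left ht.le]
    simpa using (hasDerivAt_pow 2 t).congr_of_eventuallyEq hev

lemma qmin_hasDerivAt (t : ℝ) : HasDerivAt (fun s : ℝ => (min s 0)^2) (2 * min t 0) t := by
  have h := (q_hasDerivAt (-t)).comp t (hasDerivAt_neg t)
  have hfun : (fun s : ℝ => (max (-s) 0)^2) = fun s : ℝ => (min s 0)^2 := by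
    funext s
    have h0 : max (-s) 0 = -(min s 0) := by
      rcases le_total s 0 with hs|hs
      · rw [min_eq_left hs, max_eq_left (neg_nonneg.mpr hs)]
      · rw [min_eq_right hs, max_eq_right (neg_nonpos.mpr hs), neg_zero]
    rw [h0, neg_sq]
  have h2 : HasDerivAt (fun s : ℝ => (min s 0)^2) (2 * max (-t) 0 * (-1)) t := by
    rw [← hfun]; exact h
  have : 2 * max (-t) 0 * (-1) = 2 * min t 0 := by
    rcases le_total t 0 with ht|ht
    · rw [min_eq_left ht, max_eq_left (neg_nonneg.mpr ht)]; ring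
    · rw [min_eq_right ht, max_eq_right (neg_nonpos.mpr ht)]; ring
  rwa [this] at h2


lemma lip_aux (x0 : ℝ) (hx0 : 0 ≤ x0) (y z : ℝ) :
    |(min y 0 + max (y - x0) 0) - (min z 0 + max (z - x0) 0)| ≤ |y - z| := by
  simp only [min_def, max_def]
  split_ifs <;>
    (rcases abs_cases (y - z) with ⟨hd, hd'⟩ | ⟨hd, hd'⟩ <;> rw [hd, abs_le] <;>
      constructor <;> linarith)

lemma f_hasDerivAt (U L x0 : ℝ) (y : ℝ) :
    HasDerivAt (fun s : ℝ => U * s + L / 2 * ((min s 0)^2 + (max (s - x0) 0)^2))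
      (U + L * (min y 0 + max (y - x0) 0)) y := by
  have h1 := qmin_hasDerivAt y
  have h2 : HasDerivAt (fun s : ℝ => (max (s - x0) 0)^2) (2 * max (y - x0) 0 * 1) y := by
    simpa [Function.comp_def] using (q_hasDerivAt (y - x0)).comp y ((hasDerivAt_id y).sub_const x0)
  have h3 := ((hasDerivAt_id y).const_mul U).add ((h1.add h2).const_mul (L/2))
  exact h3.congr_deriv (by ring)

theorem stmt_17 (L Δ : ℝ) (N : ℕ) (h : ℕ → ℝ)
    (hL : 0 < L) (hΔ : 0 < Δ) (hN : 1 ≤ N)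
    (hh : ∀ i < N, h i ∈ Set.Ioc (0:ℝ) (3 / 2))
    (U : ℝ)
    (hU : U = Real.sqrt (L * Δ / ∑ i ∈ Finset.range N, h i))
    (xseq fval : ℕ → ℝ)
    (hx : ∀ i, xseq i = (U / L) * ∑ j ∈ Finset.Ico i N, h j)
    (hfv : ∀ i, fval i = Δ - (U ^ 2 / (2 * L)) *
      ∑ j ∈ Finset.range i, h j * 2) :
    ∃ f : ℝ → ℝ,
      (∀ y : ℝ, y ≤ xseq N →
        f y = L / 2 * (y + U / L) ^ 2 - U ^ 2 / (2 * L)) ∧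
      (∀ i < N, ∀ y ∈ Set.Icc (xseq (i + 1)) (xseq i),
        f y = U * (y - xseq (i + 1)) + fval (i + 1)) ∧
      (∀ y : ℝ, xseq 0 ≤ y →
        f y = L / 2 * (y - xseq 0) ^ 2 + U * (y - xseq 0) + fval 0) ∧
      ConvexOn ℝ Set.univ f ∧
      Differentiable ℝ f ∧
      (∀ y z : ℝ, |deriv f y - deriv f z| ≤ L * |y - z|) ∧
      (∀ i < N, xseq (i + 1) = xseq i - (h i / L) * deriv f (xseq i)) ∧
      (deriv f (xseq N)) ^ 2 =
        L * (f (xseq 0) - f (xseq N)) / ∑ i ∈ Finset.range N, h i := by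
  set S := ∑ i ∈ Finset.range N, h i with hSdef
  have hS : 0 < S := Finset.sum_pos
    (fun i hi => (hh i (Finset.mem_range.mp hi)).1)
    ⟨0, Finset.mem_range.mpr (by omega)⟩
  have hU2 : U ^ 2 = L * Δ / S := by
    rw [hU, Real.sq_sqrt (by positivity)]
  have hUpos : 0 < U := by
    rw [hU]; exact Real.sqrt_pos.mpr (by positivity)
  have hU2' : U ^ 2 * S = L * Δ := by
    rw [hU2, div_mul_cancel₀ _ hS.ne']
  -- basic facts about xseq
  have hxnn : ∀ i, 0 ≤ xseq i := by
    intro i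
    rw [hx i]
    exact mul_nonneg (div_nonneg hUpos.le hL.le)
      (Finset.sum_nonneg fun j hj => (hh j (Finset.mem_Ico.mp hj).2).1.le)
  have hxle0 : ∀ i, xseq i ≤ xseq 0 := by
    intro i
    rw [hx i, hx 0]
    refine mul_le_mul_of_nonneg_left ?_ (div_nonneg hUpos.le hL.le)
    exact Finset.sum_le_sum_of_subset_of_nonneg
      (Finset.Ico_subset_Ico (Nat.zero_le i) le_rfl)
      (fun j hj _ => (hh j (Finset.mem_Ico.mp hj).2).1.le)
  have hxN : xseq N = 0 := by
    rw [hx N, Finset.Ico_self, Finset.sum_empty, mul_zero]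
  have hx0S : xseq 0 = U / L * S := by
    rw [hx 0, hSdef, Finset.range_eq_Ico]
  have hUx0 : U * xseq 0 = Δ := by
    rw [hx0S]
    field_simp
    nlinarith [hU2']
  have hfvx : ∀ k, k ≤ N → fval k = U * xseq k := by
    intro k hk
    rw [hfv k, hx k]
    have hsplit : (∑ j ∈ Finset.range k, h j) + ∑ j ∈ Finset.Ico k N, h j = S := by
      simp only [hSdef, Finset.range_eq_Ico]
      exact Finset.sum_Ico_consecutive _ (Nat.zero_le k) hk
    have h2 : ∑ j ∈ Finset.range k, h j * 2 = (∑ j ∈ Finset.range k, h j) * 2 := by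
      rw [Finset.sum_mul]
    rw [h2]
    have hΔ' : Δ = U ^ 2 * S / L := by
      rw [hU2']; field_simp
    rw [hΔ', ← hsplit]
    field_simp
    ring
  -- the function
  set x0 := xseq 0 with hx0def
  have hx0nn : 0 ≤ x0 := hxnn 0
  set f : ℝ → ℝ := fun s => U * s + L / 2 * ((min s 0)^2 + (max (s - x0) 0)^2) with hfdef
  have hfd : ∀ y, HasDerivAt f (U + L * (min y 0 + max (y - x0) 0)) y :=
    fun y => f_hasDerivAt U L x0 y
  have hderiv : ∀ y, deriv f y = U + L * (min y 0 + max (y - x0) 0) :=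
    fun y => (hfd y).deriv
  refine ⟨f, ?_, ?_, ?_, ?_, ?_, ?_, ?_, ?_⟩
  · -- left quadratic
    intro y hy
    rw [hxN] at hy
    rw [hfdef]
    simp only
    rw [min_eq_left hy, max_eq_right (by linarith : y - x0 ≤ 0)]
    field_simp
    ring
  · -- middle linear pieces
    intro i hi y hy
    obtain ⟨hy1, hy2⟩ := hy
    have h1 : 0 ≤ y := le_trans (hxnn (i+1)) hy1
    have h2 : y ≤ x0 := le_trans hy2 (hxle0 i)
    rw [hfdef]
    simp only
    rw [min_eq_right h1, max_eq_right (by linarith : y - x0 ≤ 0)]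
    rw [hfvx (i+1) hi]
    ring
  · -- right quadratic
    intro y hy
    rw [hfdef]
    simp only
    rw [min_eq_right (le_trans hx0nn hy), max_eq_left (by linarith : 0 ≤ y - x0)]
    rw [hfvx 0 (Nat.zero_le N), ← hx0def]
    ring
  · -- convexity
    have hmono : Monotone (fun y : ℝ => U + L * (min y 0 + max (y - x0) 0)) := by
      refine monotone_const.add (Monotone.const_mul ?_ hL.le)
      have m1 : Monotone (fun y : ℝ => y - x0) :=
        fun a b hab => by simpa using sub_le_sub_right hab x0
      exact (monotone_id.min monotone_const).add (m1.max monotone_const)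
    refine MonotoneOn.convexOn_of_deriv convex_univ ?_ ?_ ?_
    · exact fun y _ => ((hfd y).continuousAt).continuousWithinAt
    · exact fun a _ => (hfd a).differentiableAt.differentiableWithinAt
    · intro a ha b hb hab
      rw [hderiv a, hderiv b]
      exact hmono hab
  · exact fun y => (hfd y).differentiableAt
  · -- Lipschitz derivative
    intro y z
    rw [hderiv y, hderiv z]
    have := lip_aux x0 hx0nn y z
    calc |U + L * (min y 0 + max (y - x0) 0) - (U + L * (min z 0 + max (z - x0) 0))|
        = |L| * |(min y 0 + max (y - x0) 0) - (min z 0 + max (z - x0) 0)| := by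
          rw [← abs_mul]; ring_nf
      _ ≤ L * |y - z| := by
          rw [abs_of_pos hL]
          exact mul_le_mul_of_nonneg_left this hL.le
  · -- gradient steps
    intro i hi
    have hd : deriv f (xseq i) = U := by
      rw [hderiv]
      rw [min_eq_right (hxnn i), max_eq_right (by linarith [hxle0 i] : xseq i - x0 ≤ 0)]
      ring
    rw [hd, hx i, hx (i+1)]
    rw [Finset.sum_eq_sum_Ico_succ_bot hi]
    field_simp
    ring
  · -- final equality
    have hd : deriv f (xseq N) = U := by
      rw [hderiv, hxN]
      rw [min_self, max_eq_right (by linarith : (0:ℝ) - x0 ≤ 0)]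
      ring
    have hf0 : f (xseq N) = 0 := by
      rw [hxN, hfdef]
      simp only
      rw [min_self, max_eq_right (by linarith : (0:ℝ) - x0 ≤ 0)]
      ring
    have hfx0 : f (xseq 0) = U * x0 := by
      rw [hfdef]
      simp only
      rw [← hx0def, min_eq_right hx0nn, sub_self, max_self]
      ring
    rw [hd, hf0, hfx0, sub_zero, hx0S]
    field_simp
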